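/- Let n ≥ 2 and let Γ be a full (n+3)-coloring of the standard n-sphere S^n. Assume there is no (n−1)-sphere in S^n containing n + 2 different colors. Then there exist an (n−1)-sphere S in S^n whose image Γ(S) consists of exactly n + 1 colors, and two points x, y ∈ S^n whose colors are the two remaining colors (so Γ(x) ≠ Γ(y) and neither Γ(x) nor Γ(y) belongs to Γ(S)), such that x and y lie in different connected components of S^n \ S. -/

import Mathlib

open scoped RealInnerProductSpace
open Module Set

set_option maxHeartbeats 1000000

private lemma same_sign_pair {ι : Type*} [Fintype ι] [DecidableEq ι] {V : Type*}
    [AddCommGroup V] [Module ℝ V] {v : ι → V} (hv : Function.Injective v)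
    {w : ι → ℝ} (hw0 : ∑ k, w k = 0) (hwv : ∑ k, w k • v k = 0)
    (e : ι) (he : w e ≠ 0) : ∃ i j, i ≠ j ∧ 0 < w i * w j := by
  by_contra hcon
  push_neg at hcon
  have hpos : ∃ a, 0 < w a := by
    by_contra hp
    push_neg at hp
    rcases lt_or_gt_of_ne he with hlt | hgt
    · have : ∑ k, w k < ∑ _k : ι, (0 : ℝ) :=
        Finset.sum_lt_sum (fun i _ => hp i) ⟨e, Finset.mem_univ e, hlt⟩
      simp [hw0] at this
    · exact absurd hgt (not_lt.mpr (hp e))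
  have hneg : ∃ b, w b < 0 := by
    by_contra hp
    push_neg at hp
    rcases lt_or_gt_of_ne he with hlt | hgt
    · exact absurd hlt (not_lt.mpr (hp e))
    · have : ∑ _k : ι, (0 : ℝ) < ∑ k, w k :=
        Finset.sum_lt_sum (fun i _ => hp i) ⟨e, Finset.mem_univ e, hgt⟩
      simp [hw0] at this
  obtain ⟨a, ha⟩ := hpos
  obtain ⟨b, hb⟩ := hneg
  have hab : a ≠ b := by intro h; rw [h] at ha; linarith
  have hz : ∀ k, k ≠ a → k ≠ b → w k = 0 := by
    intro k hka hkb
    rcases lt_trichotomy (w k) 0 with h | h | h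
    · have h1 := hcon k b hkb
      nlinarith [mul_pos_of_neg_of_neg h hb]
    · exact h
    · have h1 := hcon k a hka
      nlinarith [mul_pos h ha]
  have hsum2 : w a + w b = 0 := by
    have hs := Finset.sum_subset (Finset.subset_univ ({a, b} : Finset ι))
      (fun x _ hx => by
        simp only [Finset.mem_insert, Finset.mem_singleton, not_or] at hx
        exact hz x hx.1 hx.2)
    rw [Finset.sum_pair hab] at hs
    rw [hs, hw0]
  have hvec2 : w a • v a + w b • v b = 0 := by
    have hs := Finset.sum_subset (f := fun x => w x • v x)
      (Finset.subset_univ ({a, b} : Finset ι))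
      (fun x _ hx => by
        simp only [Finset.mem_insert, Finset.mem_singleton, not_or] at hx
        rw [hz x hx.1 hx.2, zero_smul])
    rw [Finset.sum_pair hab] at hs
    rw [hs, hwv]
  have hwb : w b = -w a := by linarith
  have hzero : w a • (v a - v b) = 0 := by
    rw [smul_sub, sub_eq_zero]
    have : w a • v a + (-w a) • v b = 0 := by rw [← hwb]; exact hvec2
    rw [neg_smul] at this
    exact add_neg_eq_zero.mp this
  have := (smul_eq_zero.mp hzero).resolve_left (ne_of_gt ha)
  exact hab (hv (sub_eq_zero.mp this))


/-- Separation lemma: if `Γ` is a full `(n+3)`-coloring of the standard `n`-sphere (`n ≥ 2`)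
with no `(n-1)`-sphere containing `n + 2` colors, then there are an `(n-1)`-sphere `S`
carrying exactly `n + 1` colors and two points, of the two remaining (distinct) colors,
lying in different connected components of the complement of `S` in the sphere. -/
theorem separation_lemma (n : ℕ) (hn : 2 ≤ n)
    (Γ : (Metric.sphere (0 : EuclideanSpace ℝ (Fin (n + 1))) 1) → Fin (n + 3))
    (hΓ : Function.Surjective Γ)
    (hno : ∀ H : AffineSubspace ℝ (EuclideanSpace ℝ (Fin (n + 1))),
      Module.finrank ℝ H.direction = n → (∃ x ∈ H, ‖x‖ < 1) →
      (Γ '' {p | (p : EuclideanSpace ℝ (Fin (n + 1))) ∈ H}).ncard < n + 2) :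
    ∃ H : AffineSubspace ℝ (EuclideanSpace ℝ (Fin (n + 1))),
      Module.finrank ℝ H.direction = n ∧
      (∃ x ∈ H, ‖x‖ < 1) ∧
      (Γ '' {p | (p : EuclideanSpace ℝ (Fin (n + 1))) ∈ H}).ncard = n + 1 ∧
      ∃ x y : (Metric.sphere (0 : EuclideanSpace ℝ (Fin (n + 1))) 1),
        Γ x ≠ Γ y ∧
        Γ x ∉ Γ '' {p | (p : EuclideanSpace ℝ (Fin (n + 1))) ∈ H} ∧
        Γ y ∉ Γ '' {p | (p : EuclideanSpace ℝ (Fin (n + 1))) ∈ H} ∧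
        x ∈ {p : (Metric.sphere (0 : EuclideanSpace ℝ (Fin (n + 1))) 1) |
              (p : EuclideanSpace ℝ (Fin (n + 1))) ∉ H} ∧
        y ∈ {p : (Metric.sphere (0 : EuclideanSpace ℝ (Fin (n + 1))) 1) |
              (p : EuclideanSpace ℝ (Fin (n + 1))) ∉ H} ∧
        connectedComponentIn
            {p : (Metric.sphere (0 : EuclideanSpace ℝ (Fin (n + 1))) 1) |
              (p : EuclideanSpace ℝ (Fin (n + 1))) ∉ H} x ≠
          connectedComponentIn
            {p : (Metric.sphere (0 : EuclideanSpace ℝ (Fin (n + 1))) 1) |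
              (p : EuclideanSpace ℝ (Fin (n + 1))) ∉ H} y := by
  classical
  have hfE : finrank ℝ (EuclideanSpace ℝ (Fin (n + 1))) = n + 1 := finrank_euclideanSpace_fin
  haveI : Fact (finrank ℝ (EuclideanSpace ℝ (Fin (n + 1))) = n + 1) := ⟨hfE⟩
  choose pt hpt using hΓ
  set v : Fin (n + 3) → EuclideanSpace ℝ (Fin (n + 1)) := fun cc => (pt cc : _) with hvdef
  have hvnorm : ∀ cc, ‖v cc‖ = 1 := fun cc => by
    simpa [hvdef, mem_sphere_zero_iff_norm] using (pt cc).2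
  have hvinj : Function.Injective v := fun a b hab => by
    have h1 : pt a = pt b := Subtype.ext hab
    rw [← hpt a, ← hpt b, h1]
  -- affine dependence
  have hdep : ¬ AffineIndependent ℝ v := by
    intro h
    have h1 := h.card_le_finrank_succ
    have h2 : finrank ℝ (vectorSpan ℝ (Set.range v)) ≤ n + 1 :=
      le_trans (Submodule.finrank_le _) (le_of_eq hfE)
    rw [Fintype.card_fin] at h1
    omega
  rw [affineIndependent_iff] at hdep
  push_neg at hdep
  obtain ⟨s, w₀, hw₀sum, hw₀vec, e, hes, he⟩ := hdep
  set w : Fin (n + 3) → ℝ := fun k => if k ∈ s then w₀ k else 0 with hwdef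
  have hwsum : ∑ k, w k = 0 := by
    rw [hwdef]
    rw [Finset.sum_ite_mem, Finset.univ_inter, hw₀sum]
  have hwvec : ∑ k, w k • v k = 0 := by
    rw [hwdef]
    simp only [ite_smul, zero_smul]
    rw [Finset.sum_ite_mem, Finset.univ_inter, hw₀vec]
  have hwe : w e ≠ 0 := by simpa [hwdef, hes] using he
  obtain ⟨i, j, hij, hsign⟩ := same_sign_pair hvinj hwsum hwvec e hwe
  have hwi : w i ≠ 0 := fun h => by rw [h, zero_mul] at hsign; exact lt_irrefl _ hsign
  have hwj : w j ≠ 0 := fun h => by rw [h, mul_zero] at hsign; exact lt_irrefl _ hsign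
  -- cardinality of the complement of {i, j}
  have hfilter : (Finset.univ.filter (fun k : Fin (n + 3) => k ≠ i ∧ k ≠ j)).card = n + 1 := by
    have heq : Finset.univ.filter (fun k : Fin (n + 3) => k ≠ i ∧ k ≠ j)
        = ({i, j} : Finset (Fin (n + 3)))ᶜ := by
      ext k
      simp [not_or]
    rw [heq, Finset.card_compl, Finset.card_pair hij]
    simp
  have hcard : Fintype.card {k : Fin (n + 3) // k ≠ i ∧ k ≠ j} = n + 1 := by
    rw [Fintype.card_subtype]
    exact hfilter
  have h2lt : 1 < Fintype.card {k : Fin (n + 3) // k ≠ i ∧ k ≠ j} := by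
    rw [hcard]; omega
  obtain ⟨a0, a1, ha01⟩ := Fintype.exists_pair_of_one_lt_card h2lt
  obtain ⟨k0, hk0⟩ := a0
  obtain ⟨k1, hk1⟩ := a1
  have hk01 : k0 ≠ k1 := fun h => ha01 (Subtype.ext h)
  -- the direction span and the normal vector
  set g : {k : Fin (n + 3) // k ≠ i ∧ k ≠ j} → EuclideanSpace ℝ (Fin (n + 1)) :=
    fun k => v k with hgdef
  set D := vectorSpan ℝ (Set.range g) with hDdef
  have hDle : finrank ℝ D ≤ n := finrank_vectorSpan_range_le ℝ g hcard
  have hDne : D ≠ ⊤ := by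
    intro h
    rw [h, finrank_top, hfE] at hDle
    omega
  have hDbot : Dᗮ ≠ ⊥ := by rwa [ne_eq, Submodule.orthogonal_eq_bot_iff]
  obtain ⟨u, huD, hu0⟩ := Submodule.exists_mem_ne_zero_of_ne_bot hDbot
  set c : ℝ := ⟪u, v k0⟫ with hcdef
  set H := AffineSubspace.mk' (v k0) ((ℝ ∙ u)ᗮ) with hHdef
  have hmemH : ∀ x : EuclideanSpace ℝ (Fin (n + 1)), x ∈ H ↔ ⟪u, x⟫ = c := by
    intro x
    rw [hHdef, AffineSubspace.mem_mk',
      Submodule.mem_orthogonal_singleton_iff_inner_right, vsub_eq_sub,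
      inner_sub_right, sub_eq_zero, hcdef]
  have hfin : finrank ℝ H.direction = n := by
    rw [hHdef, AffineSubspace.direction_mk']
    exact Submodule.finrank_orthogonal_span_singleton (_i := ⟨hfE⟩) hu0
  have hvkH : ∀ k, k ≠ i → k ≠ j → v k ∈ H := by
    intro k hki hkj
    rw [hmemH]
    have hmem : v k - v k0 ∈ D := by
      have h1 : g ⟨k, hki, hkj⟩ ∈ Set.range g := ⟨_, rfl⟩
      have h2 : g ⟨k0, hk0⟩ ∈ Set.range g := ⟨_, rfl⟩
      simpa [hgdef, vsub_eq_sub] using vsub_mem_vectorSpan ℝ h1 h2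
    have h0 : ⟪v k - v k0, u⟫ = 0 := (Submodule.mem_orthogonal D u).mp huD _ hmem
    rw [real_inner_comm, inner_sub_right, sub_eq_zero] at h0
    rw [h0, hcdef]
  -- H meets the open ball
  have hk1H : v k1 ∈ H := hvkH k1 hk1.1 hk1.2
  have hball : ∃ x ∈ H, ‖x‖ < 1 := by
    refine ⟨(1 / 2 : ℝ) • (v k0 + v k1), ?_, ?_⟩
    · rw [hmemH, inner_smul_right, inner_add_right]
      have h1 : ⟪u, v k1⟫ = c := (hmemH _).mp hk1H
      rw [h1, ← hcdef]
      ring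
    · have hne : v k0 ≠ v k1 := fun h => hk01 (hvinj h)
      have hin : ⟪v k0, v k1⟫ < 1 :=
        (inner_lt_one_iff_real_of_norm_eq_one (hvnorm k0) (hvnorm k1)).mpr hne
      have hsq : ‖(1 / 2 : ℝ) • (v k0 + v k1)‖ ^ 2 < 1 := by
        rw [← real_inner_self_eq_norm_sq]
        rw [real_inner_smul_left, inner_smul_right, inner_add_left, inner_add_right,
          inner_add_right]
        have e0 : ⟪v k0, v k0⟫ = 1 := by
          rw [real_inner_self_eq_norm_sq, hvnorm k0]; norm_num
        have e1 : ⟪v k1, v k1⟫ = 1 := by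
          rw [real_inner_self_eq_norm_sq, hvnorm k1]; norm_num
        have e2 : ⟪v k1, v k0⟫ = ⟪v k0, v k1⟫ := real_inner_comm _ _
        rw [e0, e1, e2]
        nlinarith
      nlinarith [norm_nonneg ((1 / 2 : ℝ) • (v k0 + v k1))]
  -- the colors on H
  have hlt : (Γ '' {q | (q : EuclideanSpace ℝ (Fin (n + 1))) ∈ H}).ncard < n + 2 :=
    hno H hfin hball
  have hTsub : {k : Fin (n + 3) | k ≠ i ∧ k ≠ j}
      ⊆ Γ '' {q | (q : EuclideanSpace ℝ (Fin (n + 1))) ∈ H} := by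
    rintro k ⟨hki, hkj⟩
    exact ⟨pt k, hvkH k hki hkj, hpt k⟩
  have hTcard : ({k : Fin (n + 3) | k ≠ i ∧ k ≠ j} : Set (Fin (n + 3))).ncard = n + 1 := by
    rw [Set.ncard_eq_toFinset_card', Set.toFinset_setOf]
    exact hfilter
  have hImgFin : (Γ '' {q | (q : EuclideanSpace ℝ (Fin (n + 1))) ∈ H}).Finite :=
    Set.toFinite _
  have hEq : {k : Fin (n + 3) | k ≠ i ∧ k ≠ j}
      = Γ '' {q | (q : EuclideanSpace ℝ (Fin (n + 1))) ∈ H} :=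
    Set.eq_of_subset_of_ncard_le hTsub (by omega) hImgFin
  have hiImg : (i : Fin (n + 3)) ∉ Γ '' {q | (q : EuclideanSpace ℝ (Fin (n + 1))) ∈ H} := by
    rw [← hEq]; simp
  have hjImg : (j : Fin (n + 3)) ∉ Γ '' {q | (q : EuclideanSpace ℝ (Fin (n + 1))) ∈ H} := by
    rw [← hEq]; simp
  have hncard : (Γ '' {q | (q : EuclideanSpace ℝ (Fin (n + 1))) ∈ H}).ncard = n + 1 := by
    rw [← hEq]; exact hTcard
  have hxH : (v i) ∉ H := fun h => hiImg ⟨pt i, h, hpt i⟩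
  have hyH : (v j) ∉ H := fun h => hjImg ⟨pt j, h, hpt j⟩
  -- opposite sides
  have hrel : w i * (⟪u, v i⟫ - c) + w j * (⟪u, v j⟫ - c) = 0 := by
    have hzero : ∀ k ∈ Finset.univ, k ∉ ({i, j} : Finset (Fin (n + 3))) →
        w k * (⟪u, v k⟫ - c) = 0 := by
      intro k _ hk
      simp only [Finset.mem_insert, Finset.mem_singleton, not_or] at hk
      rw [(hmemH _).mp (hvkH k hk.1 hk.2), sub_self, mul_zero]
    have hsub := Finset.sum_subset (f := fun k => w k * (⟪u, v k⟫ - c))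
      (Finset.subset_univ ({i, j} : Finset (Fin (n + 3)))) hzero
    have htot : ∑ k, w k * (⟪u, v k⟫ - c) = 0 := by
      have h1 : ∑ k, w k * ⟪u, v k⟫ = 0 := by
        have h0 : ⟪u, ∑ k, w k • v k⟫ = (0 : ℝ) := by rw [hwvec, inner_zero_right]
        rw [inner_sum] at h0
        calc ∑ k, w k * ⟪u, v k⟫
            = ∑ k, ⟪u, w k • v k⟫ :=
              Finset.sum_congr rfl fun k _ => (real_inner_smul_right _ _ _).symm
          _ = 0 := h0
      have h2 : ∑ k, w k * c = 0 := by rw [← Finset.sum_mul, hwsum, zero_mul]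
      calc ∑ k, w k * (⟪u, v k⟫ - c)
          = ∑ k, (w k * ⟪u, v k⟫ - w k * c) := by
            refine Finset.sum_congr rfl fun k _ => by ring
        _ = 0 := by rw [Finset.sum_sub_distrib, h1, h2, sub_zero]
    rw [htot, Finset.sum_pair hij] at hsub
    simpa using hsub
  have hfi : ⟪u, v i⟫ ≠ c := fun h => hxH ((hmemH _).mpr h)
  have hfj : ⟪u, v j⟫ ≠ c := fun h => hyH ((hmemH _).mpr h)
  have hopp : (⟪u, v i⟫ - c) * (⟪u, v j⟫ - c) < 0 := by
    have hb0 : w j * (⟪u, v j⟫ - c) ≠ 0 := mul_ne_zero hwj (sub_ne_zero.mpr hfj)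
    have hb1 : 0 < (w j * (⟪u, v j⟫ - c)) ^ 2 :=
      lt_of_le_of_ne (sq_nonneg _) (Ne.symm (pow_ne_zero 2 hb0))
    have h1 : w i * (⟪u, v i⟫ - c) = -(w j * (⟪u, v j⟫ - c)) := by linarith
    have key : (w i * w j) * ((⟪u, v i⟫ - c) * (⟪u, v j⟫ - c))
        = -((w j * (⟪u, v j⟫ - c)) ^ 2) := by
      calc (w i * w j) * ((⟪u, v i⟫ - c) * (⟪u, v j⟫ - c))
          = (w i * (⟪u, v i⟫ - c)) * (w j * (⟪u, v j⟫ - c)) := by ring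
        _ = -(w j * (⟪u, v j⟫ - c)) * (w j * (⟪u, v j⟫ - c)) := by rw [h1]
        _ = -((w j * (⟪u, v j⟫ - c)) ^ 2) := by ring
    nlinarith [key, hb1, hsign]
  -- conclusion
  refine ⟨H, hfin, hball, hncard, pt i, pt j, ?_, ?_, ?_, hxH, hyH, ?_⟩
  · rw [hpt i, hpt j]; exact hij
  · rw [hpt i]; exact hiImg
  · rw [hpt j]; exact hjImg
  · intro hCC
    set U := {q : (Metric.sphere (0 : EuclideanSpace ℝ (Fin (n + 1))) 1) |
        (q : EuclideanSpace ℝ (Fin (n + 1))) ∉ H} with hUdef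
    have hxU : pt i ∈ U := hxH
    have hyU : pt j ∈ U := hyH
    set f : (Metric.sphere (0 : EuclideanSpace ℝ (Fin (n + 1))) 1) → ℝ :=
      fun q => ⟪u, (q : EuclideanSpace ℝ (Fin (n + 1)))⟫ with hfdef
    have hfc : Continuous f := Continuous.inner continuous_const continuous_subtype_val
    have hC : IsPreconnected (connectedComponentIn U (pt i)) :=
      (isConnected_connectedComponentIn_iff.mpr hxU).isPreconnected
    have hxC : pt i ∈ connectedComponentIn U (pt i) := mem_connectedComponentIn hxU
    have hyC : pt j ∈ connectedComponentIn U (pt i) := by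
      rw [hCC]; exact mem_connectedComponentIn hyU
    have hex : ∃ z ∈ connectedComponentIn U (pt i), f z = (fun _ => c) z := by
      rcases mul_neg_iff.mp hopp with ⟨h1, h2⟩ | ⟨h1, h2⟩
      · exact hC.intermediate_value₂ hyC hxC hfc.continuousOn continuousOn_const
          (by simpa [hfdef] using h2.le) (by simpa [hfdef] using (sub_pos.mp h1).le)
      · exact hC.intermediate_value₂ hxC hyC hfc.continuousOn continuousOn_const
          (by simpa [hfdef] using h1.le) (by simpa [hfdef] using (sub_pos.mp h2).le)
    obtain ⟨z, hzC, hz⟩ := hex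
    exact (connectedComponentIn_subset U (pt i) hzC) ((hmemH _).mpr hz)
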